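/- Let H be a d×d Hermitian complex matrix with eigenvalues λ₁, ..., λ_d, and let Δ = diag(√p₁, ..., √p_d) with p_i ≥ 0 and Σ_i p_i = 1. Then ‖Δ H Δ‖_* ≤ Σ_i p̃_i |λ|_i ≤ max_i |λ_i|, where |λ|_1 ≥ |λ|_2 ≥ ... ≥ |λ|_d are the absolute values of the eigenvalues of H in decreasing order and p̃_1 ≥ p̃_2 ≥ ... ≥ p̃_d are the weights p_i in decreasing order. -/

import Mathlib

open Matrix
open scoped ComplexOrder

/-- The trace norm (nuclear norm) of a complex matrix: the trace of `√(Mᴴ M)`,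
which equals the sum of the singular values of `M`. -/
noncomputable def traceNorm {n : Type*} [Fintype n] [DecidableEq n]
    (M : Matrix n n ℂ) : ℝ :=
  (((Matrix.posSemidef_conjTranspose_mul_self M).1.eigenvectorUnitary.1 *
      Matrix.diagonal (((↑) : ℝ → ℂ) ∘ Real.sqrt ∘ (Matrix.posSemidef_conjTranspose_mul_self M).1.eigenvalues) *
      (star (Matrix.posSemidef_conjTranspose_mul_self M).1.eigenvectorUnitary : Matrix n n ℂ)).trace).re

/-- The values of a finite real tuple rearranged in decreasing order. -/
noncomputable def sortedDesc {d : ℕ} (f : Fin d → ℝ) : Fin d → ℝ :=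
  fun i =>
    ((List.ofFn f).insertionSort (· ≥ ·)).get
      ⟨i.1, by rw [List.length_insertionSort, List.length_ofFn]; exact i.2⟩

lemma ofFn_sortedDesc {d : ℕ} (f : Fin d → ℝ) :
    List.ofFn (sortedDesc f) = (List.ofFn f).insertionSort (· ≥ ·) := by
  apply List.ext_get
  · simp
  · intro i h1 h2
    simp [sortedDesc]

lemma sortedDesc_eq_comp {d : ℕ} (f : Fin d → ℝ) :
    sortedDesc f = f ∘ (Tuple.sort (fun i => -f i)) := by
  have hmono : Monotone ((fun i => -f i) ∘ Tuple.sort (fun i => -f i)) :=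
    Tuple.monotone_sort _
  have hanti : Antitone (f ∘ Tuple.sort (fun i => -f i)) := by
    intro a b hab
    have := hmono hab
    simpa using this
  have hs1 : ((List.ofFn f).insertionSort (· ≥ ·)).Pairwise (· ≥ ·) :=
    List.pairwise_insertionSort _ _
  have hs2 : (List.ofFn (f ∘ Tuple.sort (fun i => -f i))).Pairwise (· ≥ ·) := by
    rw [List.pairwise_ofFn]
    intro a b hab
    exact hanti hab.le
  have hperm : (List.ofFn (sortedDesc f)).Perm
      (List.ofFn (f ∘ Tuple.sort (fun i => -f i))) := by
    rw [ofFn_sortedDesc]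
    exact ((List.ofFn f).perm_insertionSort (· ≥ ·)).trans
      ((Tuple.sort (fun i => -f i)).ofFn_comp_perm f).symm
  have := List.Perm.eq_of_pairwise' (by rw [ofFn_sortedDesc]; exact hs1) hs2 hperm
  exact List.ofFn_injective this

lemma antitone_sortedDesc {d : ℕ} (f : Fin d → ℝ) : Antitone (sortedDesc f) := by
  rw [sortedDesc_eq_comp]
  intro a b hab
  have := Tuple.monotone_sort (fun i => -f i) hab
  simpa using this

lemma rearrange_le {d : ℕ} (a b : Fin d → ℝ) (τ : Equiv.Perm (Fin d)) :
    ∑ j, a j * b (τ j) ≤ ∑ i, sortedDesc b i * sortedDesc a i := by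
  set α := Tuple.sort (fun i => -a i) with hα
  set β := Tuple.sort (fun i => -b i) with hβ
  have ha : sortedDesc a = a ∘ α := sortedDesc_eq_comp a
  have hb : sortedDesc b = b ∘ β := sortedDesc_eq_comp b
  have hmono : Monovary (sortedDesc a) (sortedDesc b) :=
    (antitone_sortedDesc a).monovary (antitone_sortedDesc b)
  set π : Equiv.Perm (Fin d) := α.trans (τ.trans β.symm) with hπ
  have h1 : ∑ j, a j * b (τ j) = ∑ k, sortedDesc a k * sortedDesc b (π k) := by
    rw [← Equiv.sum_comp α (fun j => a j * b (τ j))]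
    refine Finset.sum_congr rfl fun k _ => ?_
    rw [ha, hb]
    simp [hπ]
  have h2 := hmono.sum_smul_comp_perm_le_sum_smul (σ := π)
  rw [h1]
  calc ∑ k, sortedDesc a k * sortedDesc b (π k) ≤ ∑ i, sortedDesc a i * sortedDesc b i := by
        simpa [smul_eq_mul] using h2
    _ = ∑ i, sortedDesc b i * sortedDesc a i := by simp [mul_comm]

lemma ds_le {d : ℕ} (a b : Fin d → ℝ) (ha : ∀ i, 0 ≤ a i) (hb : ∀ i, 0 ≤ b i)
    (B : Matrix (Fin d) (Fin d) ℝ) (hB : B ∈ doublyStochastic ℝ (Fin d)) :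
    ∑ j, ∑ i, a j * (B j i * b i) ≤ ∑ i, sortedDesc b i * sortedDesc a i := by
  obtain ⟨w, hw0, hw1, hwB⟩ := exists_eq_sum_perm_of_mem_doublyStochastic hB
  have hperm : ∀ σ : Equiv.Perm (Fin d), ∀ j, ∑ i, (σ.permMatrix ℝ) j i * b i = b (σ j) := by
    intro σ j
    simp [Equiv.Perm.permMatrix, PEquiv.toMatrix, Equiv.toPEquiv_apply]
  have hBji : ∀ j i, B j i = ∑ σ : Equiv.Perm (Fin d), w σ * (σ.permMatrix ℝ) j i := by
    intro j i
    rw [← hwB]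
    simp [Matrix.sum_apply]
  have h1 : ∀ j, ∑ i, a j * (B j i * b i) = ∑ σ : Equiv.Perm (Fin d), w σ * (a j * b (σ j)) := by
    intro j
    calc ∑ i, a j * (B j i * b i)
        = ∑ i, ∑ σ : Equiv.Perm (Fin d), w σ * (a j * ((σ.permMatrix ℝ) j i * b i)) := by
          refine Finset.sum_congr rfl fun i _ => ?_
          rw [hBji, Finset.sum_mul, Finset.mul_sum]
          refine Finset.sum_congr rfl fun σ _ => by ring
      _ = ∑ σ : Equiv.Perm (Fin d), ∑ i, w σ * (a j * ((σ.permMatrix ℝ) j i * b i)) :=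
          Finset.sum_comm
      _ = ∑ σ : Equiv.Perm (Fin d), w σ * (a j * b (σ j)) := by
          refine Finset.sum_congr rfl fun σ _ => ?_
          rw [← hperm σ j, Finset.mul_sum, Finset.mul_sum]
  have key : ∑ j, ∑ i, a j * (B j i * b i)
      = ∑ σ : Equiv.Perm (Fin d), w σ * ∑ j, a j * b (σ j) := by
    calc ∑ j, ∑ i, a j * (B j i * b i)
        = ∑ j, ∑ σ : Equiv.Perm (Fin d), w σ * (a j * b (σ j)) :=
          Finset.sum_congr rfl fun j _ => h1 j
      _ = ∑ σ : Equiv.Perm (Fin d), ∑ j, w σ * (a j * b (σ j)) := Finset.sum_comm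
      _ = ∑ σ : Equiv.Perm (Fin d), w σ * ∑ j, a j * b (σ j) := by
          refine Finset.sum_congr rfl fun σ _ => (Finset.mul_sum _ _ _).symm
  rw [key]
  calc ∑ σ : Equiv.Perm (Fin d), w σ * ∑ j, a j * b (σ j)
      ≤ ∑ σ : Equiv.Perm (Fin d), w σ * ∑ i, sortedDesc b i * sortedDesc a i := by
        refine Finset.sum_le_sum fun σ _ => ?_
        exact mul_le_mul_of_nonneg_left (rearrange_le a b σ) (hw0 σ)
    _ = ∑ i, sortedDesc b i * sortedDesc a i := by
        rw [← Finset.sum_mul, hw1, one_mul]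

lemma traceNorm_hermitian {d : ℕ} (M : Matrix (Fin d) (Fin d) ℂ) (hM : M.IsHermitian) :
    traceNorm M = ∑ k, |hM.eigenvalues k| := by
  have hMM := (Matrix.posSemidef_conjTranspose_mul_self M).1
  have hsa : IsSelfAdjoint M := hM
  have h1 : traceNorm M = (hMM.cfc Real.sqrt).trace.re := rfl
  rw [h1, ← hMM.cfc_eq, hM.eq]
  have hsq : cfc (fun x : ℝ => x * x) M = M * M := by
    rw [cfc_mul (fun x : ℝ => x) (fun x : ℝ => x) M, cfc_id' ℝ M]
  rw [← hsq, ← cfc_comp Real.sqrt (fun x : ℝ => x * x) M]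
  rw [cfc_congr (g := fun x : ℝ => |x|) (fun x _ => by simp [Real.sqrt_mul_self_eq_abs]),
    hM.cfc_eq, IsHermitian.cfc, Unitary.conjStarAlgAut_apply, Matrix.trace_mul_cycle,
    Unitary.coe_star_mul_self, Matrix.one_mul, Matrix.trace_diagonal]
  simp

/-- For a Hermitian `H` with eigenvalues `λ_i` and `Δ = diag(√p₁, …, √p_d)` with `p_i ≥ 0`,
`∑ p_i = 1`: `‖Δ H Δ‖_* ≤ ∑ i p̃_i |λ|_i ≤ max_i |λ_i|`, where `|λ|_1 ≥ |λ|_2 ≥ …` are the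
absolute eigenvalues in decreasing order and `p̃_1 ≥ p̃_2 ≥ …` the weights in decreasing
order. -/
theorem traceNorm_diag_hermitian_diag_le {d : ℕ}
    (H : Matrix (Fin d) (Fin d) ℂ) (hH : H.IsHermitian)
    (p : Fin d → ℝ) (hp : ∀ i, 0 ≤ p i) (hpsum : ∑ i, p i = 1) :
    traceNorm (Matrix.diagonal (fun i => (Real.sqrt (p i) : ℂ)) * H *
        Matrix.diagonal (fun i => (Real.sqrt (p i) : ℂ))) ≤
      ∑ i, sortedDesc p i * sortedDesc (fun k => |hH.eigenvalues k|) i ∧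
    ∑ i, sortedDesc p i * sortedDesc (fun k => |hH.eigenvalues k|) i ≤
      ⨆ i, |hH.eigenvalues i| := by
  set Δ : Matrix (Fin d) (Fin d) ℂ :=
    Matrix.diagonal (fun i => (Real.sqrt (p i) : ℂ)) with hΔdef
  have hstar : ∀ z : ℂ, star z * z = ((Complex.normSq z : ℝ) : ℂ) := fun z => by
    rw [Complex.star_def, mul_comm, Complex.mul_conj]
  have hΔH : Δᴴ = Δ := by
    rw [hΔdef, Matrix.diagonal_conjTranspose]
    refine congrArg Matrix.diagonal (funext fun i => ?_)
    simp [Pi.star_apply, Complex.conj_ofReal]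
  set M : Matrix (Fin d) (Fin d) ℂ := Δ * H * Δ with hMdef
  have hM : M.IsHermitian := by
    have := Matrix.isHermitian_mul_mul_conjTranspose Δ hH
    rwa [hΔH] at this
  set U : Matrix (Fin d) (Fin d) ℂ := (hH.eigenvectorUnitary : Matrix (Fin d) (Fin d) ℂ) with hU
  set V : Matrix (Fin d) (Fin d) ℂ := (hM.eigenvectorUnitary : Matrix (Fin d) (Fin d) ℂ) with hV
  have hUs : star U * U = 1 := Matrix.UnitaryGroup.star_mul_self hH.eigenvectorUnitary
  have hUss : U * star U = 1 := (Matrix.mem_unitaryGroup_iff).mp hH.eigenvectorUnitary.2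
  have hVss : V * star V = 1 := (Matrix.mem_unitaryGroup_iff).mp hM.eigenvectorUnitary.2
  set A : Matrix (Fin d) (Fin d) ℂ := star U * Δ * V with hA
  set lam := hH.eigenvalues with hlam
  set mu := hM.eigenvalues with hmu
  -- the diagonal of star V * M * V gives the eigenvalues of M
  have hdiagM : Matrix.diagonal (RCLike.ofReal ∘ mu) = star V * M * V :=
    (by have := hM.conjStarAlgAut_star_eigenvectorUnitary
        simpa [Unitary.coe_star] using this.symm)
  have hAct : Aᴴ = star V * Δ * U := by
    rw [hA, Matrix.conjTranspose_mul, Matrix.conjTranspose_mul, hΔH,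
      Matrix.star_eq_conjTranspose, Matrix.star_eq_conjTranspose,
      Matrix.conjTranspose_conjTranspose]
    simp [Matrix.mul_assoc]
  have hVMV : star V * M * V = Aᴴ * Matrix.diagonal (RCLike.ofReal ∘ lam) * A := by
    rw [hAct, hA, hMdef]
    conv_lhs => rw [hH.spectral_theorem, Unitary.conjStarAlgAut_apply]
    simp only [Matrix.mul_assoc]
    rfl
  -- eigenvalue formula
  have hmuk : ∀ k, mu k = ∑ j, lam j * Complex.normSq (A j k) := by
    intro k
    have h1 : ((mu k : ℝ) : ℂ) = (Matrix.diagonal (RCLike.ofReal ∘ mu)) k k := by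
      simp
    have h2 : ((Aᴴ * Matrix.diagonal (RCLike.ofReal ∘ lam) * A :
          Matrix (Fin d) (Fin d) ℂ)) k k
        = ∑ j, ((lam j * Complex.normSq (A j k) : ℝ) : ℂ) := by
      rw [Matrix.mul_assoc, Matrix.mul_apply]
      refine Finset.sum_congr rfl fun j _ => ?_
      rw [Matrix.diagonal_mul, Matrix.conjTranspose_apply, Function.comp_apply]
      rw [mul_left_comm, hstar]
      exact (RCLike.ofReal_mul (K := ℂ) (lam j) (Complex.normSq (A j k))).symm
    have := h1.trans (by rw [hdiagM, hVMV, h2])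
    have h3 : ((mu k : ℝ) : ℂ) = ((∑ j, lam j * Complex.normSq (A j k) : ℝ) : ℂ) := by
      rw [this]; push_cast; rfl
    exact_mod_cast h3
  -- row sums of |A|^2
  have hAAH : A * Aᴴ = star U * Matrix.diagonal (fun i => (p i : ℂ)) * U := by
    rw [hAct, hA]
    have hΔΔ : Δ * Δ = Matrix.diagonal (fun i => (p i : ℂ)) := by
      rw [hΔdef, Matrix.diagonal_mul_diagonal]
      exact congrArg Matrix.diagonal (funext fun i => by
        rw [← Complex.ofReal_mul, Real.mul_self_sqrt (hp i)])
    calc star U * Δ * V * (star V * Δ * U)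
        = star U * (Δ * ((V * star V) * (Δ * U))) := by simp only [Matrix.mul_assoc]
      _ = star U * (Δ * (Δ * U)) := by rw [hVss, Matrix.one_mul]
      _ = star U * Matrix.diagonal (fun i => (p i : ℂ)) * U := by
          rw [show Δ * (Δ * U) = (Δ * Δ) * U from (Matrix.mul_assoc Δ Δ U).symm, hΔΔ,
            ← Matrix.mul_assoc]
  have hrowA : ∀ j, ∑ k, Complex.normSq (A j k) = ∑ i, Complex.normSq (U i j) * p i := by
    intro j
    have h1 : (A * Aᴴ) j j = ((∑ k, Complex.normSq (A j k) : ℝ) : ℂ) := by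
      rw [Matrix.mul_apply, Complex.ofReal_sum]
      refine Finset.sum_congr rfl fun k _ => ?_
      rw [Matrix.conjTranspose_apply, mul_comm, hstar]
    have h2 : (star U * Matrix.diagonal (fun i => (p i : ℂ)) * U) j j
        = ((∑ i, Complex.normSq (U i j) * p i : ℝ) : ℂ) := by
      rw [Matrix.mul_assoc, Matrix.mul_apply, Complex.ofReal_sum]
      refine Finset.sum_congr rfl fun i _ => ?_
      rw [Matrix.diagonal_mul, Matrix.star_eq_conjTranspose, Matrix.conjTranspose_apply]
      rw [show star (U i j) * ((p i : ℂ) * U i j)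
          = (p i : ℂ) * (star (U i j) * U i j) by ring, hstar]
      rw [← Complex.ofReal_mul]
      norm_num [mul_comm]
    have h3 := h1.symm.trans (by rw [hAAH, h2])
    exact_mod_cast h3
  -- doubly stochastic matrix from U
  set B : Matrix (Fin d) (Fin d) ℝ := fun j i => Complex.normSq (U i j) with hB
  have hcolU : ∀ j, ∑ i, Complex.normSq (U i j) = 1 := by
    intro j
    have h1 : (star U * U) j j = ((∑ i, Complex.normSq (U i j) : ℝ) : ℂ) := by
      rw [Matrix.mul_apply, Complex.ofReal_sum]
      refine Finset.sum_congr rfl fun i _ => ?_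
      rw [Matrix.star_eq_conjTranspose, Matrix.conjTranspose_apply, hstar]
    have h3 := h1.symm.trans (by rw [hUs, Matrix.one_apply_eq])
    exact_mod_cast h3
  have hrowU : ∀ i, ∑ j, Complex.normSq (U i j) = 1 := by
    intro i
    have h1 : (U * star U) i i = ((∑ j, Complex.normSq (U i j) : ℝ) : ℂ) := by
      rw [Matrix.mul_apply, Complex.ofReal_sum]
      refine Finset.sum_congr rfl fun j _ => ?_
      rw [Matrix.star_eq_conjTranspose, Matrix.conjTranspose_apply, mul_comm, hstar]
    have h3 := h1.symm.trans (by rw [hUss, Matrix.one_apply_eq])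
    exact_mod_cast h3
  have hBds : B ∈ doublyStochastic ℝ (Fin d) := by
    rw [mem_doublyStochastic_iff_sum]
    refine ⟨fun j i => Complex.normSq_nonneg _, fun j => hcolU j, fun i => hrowU i⟩
  -- part 1
  have part1 : traceNorm M ≤ ∑ i, sortedDesc p i * sortedDesc (fun k => |lam k|) i := by
    rw [traceNorm_hermitian M hM]
    calc ∑ k, |mu k| ≤ ∑ k, ∑ j, |lam j| * Complex.normSq (A j k) := by
          refine Finset.sum_le_sum fun k _ => ?_
          rw [hmuk k]
          refine (Finset.abs_sum_le_sum_abs _ _).trans ?_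
          refine Finset.sum_le_sum fun j _ => ?_
          rw [abs_mul, abs_of_nonneg (Complex.normSq_nonneg _)]
      _ = ∑ j, ∑ k, |lam j| * Complex.normSq (A j k) := Finset.sum_comm
      _ = ∑ j, ∑ i, |lam j| * (B j i * p i) := by
          refine Finset.sum_congr rfl fun j _ => ?_
          rw [← Finset.mul_sum, hrowA j, Finset.mul_sum]
      _ ≤ ∑ i, sortedDesc p i * sortedDesc (fun k => |lam k|) i :=
          ds_le (fun j => |lam j|) p (fun j => abs_nonneg _) hp B hBds
  refine ⟨part1, ?_⟩
  -- part 2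
  rcases Nat.eq_zero_or_pos d with hd | hd
  · subst hd
    simp [Real.iSup_of_isEmpty]
  · have hne : Nonempty (Fin d) := ⟨⟨0, hd⟩⟩
    set S := ⨆ i, |lam i| with hS
    have hle : ∀ i, sortedDesc (fun k => |lam k|) i ≤ S := by
      intro i
      rw [sortedDesc_eq_comp]
      exact le_ciSup (f := fun i => |lam i|) (Set.Finite.bddAbove (Set.finite_range _)) _
    have hq0 : ∀ i, 0 ≤ sortedDesc p i := by
      intro i
      rw [sortedDesc_eq_comp]
      exact hp _
    have hqsum : ∑ i, sortedDesc p i = 1 := by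
      rw [sortedDesc_eq_comp]
      rw [show ∑ i, (p ∘ Tuple.sort fun i => -p i) i
          = ∑ i, p ((Tuple.sort fun i => -p i) i) from rfl]
      rw [Equiv.sum_comp (Tuple.sort fun i => -p i) p]
      exact hpsum
    calc ∑ i, sortedDesc p i * sortedDesc (fun k => |lam k|) i
        ≤ ∑ i, sortedDesc p i * S := by
          refine Finset.sum_le_sum fun i _ => ?_
          exact mul_le_mul_of_nonneg_left (hle i) (hq0 i)
      _ = S := by rw [← Finset.sum_mul, hqsum, one_mul]
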